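/- arXiv:1603.04868 — 3 statements merged into one kernel-verified Lean document; each statement's English description precedes it below -/
import Mathlib

section
/- The function g(z) = (e^{√z} − e^{−√z})/√z, defined for z > 0 (extended by g(0) = 2), is convex on [0, ∞). -/
noncomputable def g : ℝ → ℝ := fun z =>
  if z = 0 then 2 else (Real.exp (Real.sqrt z) - Real.exp (-Real.sqrt z)) / Real.sqrt z

noncomputable def gTerm (n : ℕ) (z : ℝ) : ℝ :=
  if Even n then 0 else 2 * z ^ ((n - 1) / 2) / n.factorial

lemma hasSum_gTerm {z : ℝ} (hz : 0 ≤ z) : HasSum (fun n => gTerm n z) (g z) := by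
  rcases eq_or_lt_of_le hz with h | h
  · subst h
    have : (fun n => gTerm n (0:ℝ)) = fun n => if n = 1 then 2 else 0 := by
      funext n
      rcases Nat.even_or_odd n with he | ho
      · simp [gTerm, he, Nat.even_iff.mp he, show n ≠ 1 by rintro rfl; simp at he]
      · rcases ho with ⟨k, rfl⟩
        rcases Nat.eq_zero_or_pos k with rfl | hk
        · norm_num [gTerm]
        · have : ¬ Even (2*k+1) := by simp [Nat.even_add_one, Nat.even_mul]
          simp only [gTerm, this, if_neg]
          have h1 : (2*k+1-1)/2 = k := by omega
          have h2 : 2*k+1 ≠ 1 := by omega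
          rw [h1, if_neg h2]
          simp [zero_pow (by omega : k ≠ 0)]
    have hg0 : g 0 = 2 := by simp [g]
    rw [this, hg0]
    exact hasSum_ite_eq (1 : ℕ) (2 : ℝ)
  · have hs : 0 < Real.sqrt z := Real.sqrt_pos.mpr h
    have h1 : HasSum (fun n => (Real.sqrt z) ^ n / n.factorial) (Real.exp (Real.sqrt z)) := by
      rw [Real.exp_eq_exp_ℝ]
      exact NormedSpace.expSeries_div_hasSum_exp _
    have h2 : HasSum (fun n => (-Real.sqrt z) ^ n / n.factorial)
        (Real.exp (-Real.sqrt z)) := by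
      rw [Real.exp_eq_exp_ℝ]
      exact NormedSpace.expSeries_div_hasSum_exp _
    have h3 := (h1.sub h2).div_const (Real.sqrt z)
    have hgz : g z = (Real.exp (Real.sqrt z) - Real.exp (-Real.sqrt z)) / Real.sqrt z := by
      simp [g, h.ne']
    rw [hgz]
    convert h3 using 1
    · rfl
    funext n
    rcases Nat.even_or_odd n with he | ho
    · simp [gTerm, he, he.neg_pow]
    · have hne : ¬ Even n := Nat.not_even_iff_odd.mpr ho
      simp only [gTerm, if_neg hne, ho.neg_pow]
      rcases ho with ⟨k, rfl⟩
      have h1 : (2*k+1-1)/2 = k := by omega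
      rw [h1]
      have hpow : (Real.sqrt z) ^ (2*k+1) = z ^ k * Real.sqrt z := by
        rw [pow_succ, pow_mul, Real.sq_sqrt hz]
      rw [hpow]
      field_simp
      ring
  
lemma gTerm_convex (n : ℕ) : ConvexOn ℝ (Set.Ici (0:ℝ)) (gTerm n) := by
  rcases Nat.even_or_odd n with he | ho
  · have : gTerm n = fun _ => (0:ℝ) := by funext z; simp [gTerm, he]
    rw [this]
    exact convexOn_const 0 (convex_Ici 0)
  · have hne : ¬ Even n := Nat.not_even_iff_odd.mpr ho
    have heq : gTerm n = fun z : ℝ => z ^ ((n-1)/2) * (2 / (n.factorial : ℝ)) := by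
      funext z; simp only [gTerm, if_neg hne]; ring
    rw [heq]
    have := (convexOn_pow (𝕜 := ℝ) ((n-1)/2)).smul
      (by positivity : (0:ℝ) ≤ 2 / n.factorial)
    convert this using 2 with z
    · rfl
    · rfl
    · rfl
    · rfl
    · rfl
    simp [smul_eq_mul, mul_comm]

theorem g_convex : ConvexOn ℝ (Set.Ici (0 : ℝ)) g := by
  refine ⟨convex_Ici 0, fun x hx y hy a b ha hb hab => ?_⟩
  have hxy : (0:ℝ) ≤ a • x + b • y := by
    exact (convex_Ici (0:ℝ)) hx hy ha hb hab
  have hS := hasSum_gTerm hxy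
  have hSx := (hasSum_gTerm hx).mul_left a
  have hSy := (hasSum_gTerm hy).mul_left b
  have hsum := hSx.add hSy
  refine hasSum_le (fun n => ?_) hS hsum
  exact (gTerm_convex n).2 hx hy ha hb hab
end

section
/- Let q_i, q_j, q_k be unit vectors with pairwise inner products at least γ ∈ (−1, 1]. Define q_{ij} = (q_i + q_j)/‖q_i + q_j‖ and q_{ik} = (q_i + q_k)/‖q_i + q_k‖. Then ⟨q_{ij}, q_{ik}⟩ = (1 + ⟨q_i,q_k⟩ + ⟨q_i,q_j⟩ + ⟨q_j,q_k⟩)/(2√(1 + ⟨q_i,q_j⟩)·√(1 + ⟨q_i,q_k⟩)) ≥ (1 + 3γ)/(2(1 + γ)). -/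
open scoped RealInnerProductSpace

theorem tie_edge_bound {E : Type*} [NormedAddCommGroup E] [InnerProductSpace ℝ E]
    (qi qj qk : E) (hqi : ‖qi‖ = 1) (hqj : ‖qj‖ = 1) (hqk : ‖qk‖ = 1)
    (γ Γ : ℝ) (hγ : -1 < γ) (hγ1 : γ ≤ 1) (hΓ : Γ ≤ 1)
    (hij : ⟪qi, qj⟫ ∈ Set.Icc γ Γ) (hik : ⟪qi, qk⟫ ∈ Set.Icc γ Γ)
    (hjk : ⟪qj, qk⟫ ∈ Set.Icc γ Γ) (hsum : γ + Γ < 1 + γ) :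
    ⟪(‖qi + qj‖)⁻¹ • (qi + qj), (‖qi + qk‖)⁻¹ • (qi + qk)⟫ =
      (1 + ⟪qi, qk⟫ + ⟪qi, qj⟫ + ⟪qj, qk⟫) /
        (2 * Real.sqrt (1 + ⟪qi, qj⟫) * Real.sqrt (1 + ⟪qi, qk⟫)) ∧
      (1 + 3 * γ) / (2 * (1 + γ)) ≤
        ⟪(‖qi + qj‖)⁻¹ • (qi + qj), (‖qi + qk‖)⁻¹ • (qi + qk)⟫ := by
  obtain ⟨ha1, _⟩ := hij
  obtain ⟨hb1, _⟩ := hik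
  obtain ⟨hc1, _⟩ := hjk
  set a := ⟪qi, qj⟫ with ha_def
  set b := ⟪qi, qk⟫ with hb_def
  set c := ⟪qj, qk⟫ with hc_def
  have hji : ⟪qj, qi⟫ = a := by rw [real_inner_comm]
  have hki : ⟪qk, qi⟫ = b := by rw [real_inner_comm]
  have hγ0 : (0:ℝ) < 1 + γ := by linarith
  have ha : (0:ℝ) < 1 + a := by linarith
  have hb : (0:ℝ) < 1 + b := by linarith
  set x := Real.sqrt (1 + a) with hx_def
  set y := Real.sqrt (1 + b) with hy_def
  have hx0 : 0 < x := Real.sqrt_pos.2 ha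
  have hy0 : 0 < y := Real.sqrt_pos.2 hb
  have hx2 : x ^ 2 = 1 + a := Real.sq_sqrt ha.le
  have hy2 : y ^ 2 = 1 + b := Real.sq_sqrt hb.le
  have h20 : (0:ℝ) < Real.sqrt 2 := Real.sqrt_pos.2 (by norm_num)
  have h2 : Real.sqrt 2 * Real.sqrt 2 = 2 := Real.mul_self_sqrt (by norm_num)
  have hnij : ‖qi + qj‖ = Real.sqrt 2 * x := by
    rw [← Real.sqrt_sq (norm_nonneg (qi + qj)), hx_def, ← Real.sqrt_mul (by norm_num)]
    congr 1
    rw [← real_inner_self_eq_norm_sq, inner_add_left, inner_add_right, inner_add_right,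
      real_inner_self_eq_norm_sq, real_inner_self_eq_norm_sq, hqi, hqj, hji]
    ring
  have hnik : ‖qi + qk‖ = Real.sqrt 2 * y := by
    rw [← Real.sqrt_sq (norm_nonneg (qi + qk)), hy_def, ← Real.sqrt_mul (by norm_num)]
    congr 1
    rw [← real_inner_self_eq_norm_sq, inner_add_left, inner_add_right, inner_add_right,
      real_inner_self_eq_norm_sq, real_inner_self_eq_norm_sq, hqi, hqk, hki]
    ring
  have hinner : ⟪qi + qj, qi + qk⟫ = 1 + b + a + c := by
    rw [inner_add_left, inner_add_right, inner_add_right, real_inner_self_eq_norm_sq, hqi, hji]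
    ring
  have heq : ⟪(‖qi + qj‖)⁻¹ • (qi + qj), (‖qi + qk‖)⁻¹ • (qi + qk)⟫ =
      (1 + b + a + c) / (2 * x * y) := by
    rw [real_inner_smul_left, real_inner_smul_right, hinner, hnij, hnik]
    have hd : (2:ℝ) * x * y = (Real.sqrt 2 * x) * (Real.sqrt 2 * y) := by
      rw [show (Real.sqrt 2 * x) * (Real.sqrt 2 * y) = (Real.sqrt 2 * Real.sqrt 2) * (x * y)
        from by ring, h2]; ring
    rw [hd, eq_div_iff (by positivity)]
    field_simp
  have hxy : 1 + γ ≤ x * y := by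
    rw [hx_def, hy_def, ← Real.sqrt_mul ha.le]
    calc 1 + γ = Real.sqrt ((1 + γ) ^ 2) := (Real.sqrt_sq hγ0.le).symm
      _ ≤ _ := Real.sqrt_le_sqrt (by nlinarith)
  refine ⟨by rw [heq], ?_⟩
  rw [heq, div_le_div_iff₀ (by positivity) (by positivity)]
  nlinarith [sq_nonneg (x - y), mul_nonneg hγ0.le (sq_nonneg (x - y)),
    mul_nonneg (sub_nonneg.2 hγ1) (sub_nonneg.2 hxy)]
end

section
/- Let u, v ∈ ℝ³ and let R(q) be the rotation matrix associated to a unit quaternion q = (q_i, q_j, q_k, q_r). Then uᵀR(q)v = qᵀ·Ξ(u,v)·q, where Ξ(u,v) is the symmetric 4×4 matrix with diagonal entries (u_iv_i − u_jv_j − u_kv_k, u_jv_j − u_iv_i − u_kv_k, u_kv_k − u_iv_i − u_jv_j, uᵀv) and off-diagonal entries Ξ₁₂ = u_jv_i + u_iv_j, Ξ₁₃ = u_iv_k + u_kv_i, Ξ₁₄ = u_kv_j − u_jv_k, Ξ₂₃ = u_jv_k + u_kv_j, Ξ₂₄ = u_iv_k − u_kv_i, Ξ₃₄ = u_jv_i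 − u_iv_j. -/
open scoped Matrix

theorem xi_matrix (u v : Fin 3 → ℝ) (q : Fin 4 → ℝ)
    (hq : q 0 ^ 2 + q 1 ^ 2 + q 2 ^ 2 + q 3 ^ 2 = 1) :
    u ⬝ᵥ (Matrix.mulVec
      !![1 - 2 * q 1 ^ 2 - 2 * q 2 ^ 2, 2 * (q 0 * q 1 - q 2 * q 3), 2 * (q 0 * q 2 + q 1 * q 3);
         2 * (q 0 * q 1 + q 2 * q 3), 1 - 2 * q 0 ^ 2 - 2 * q 2 ^ 2, 2 * (q 1 * q 2 - q 0 * q 3);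
         2 * (q 0 * q 2 - q 1 * q 3), 2 * (q 1 * q 2 + q 0 * q 3), 1 - 2 * q 0 ^ 2 - 2 * q 1 ^ 2] v)
    = q ⬝ᵥ (Matrix.mulVec
      !![u 0 * v 0 - u 1 * v 1 - u 2 * v 2, u 1 * v 0 + u 0 * v 1, u 0 * v 2 + u 2 * v 0, u 2 * v 1 - u 1 * v 2;
         u 1 * v 0 + u 0 * v 1, u 1 * v 1 - u 0 * v 0 - u 2 * v 2, u 1 * v 2 + u 2 * v 1, u 0 * v 2 - u 2 * v 0;
         u 0 * v 2 + u 2 * v 0, u 1 * v 2 + u 2 * v 1, u 2 * v 2 - u 0 * v 0 - u 1 * v 1, u 1 * v 0 - u 0 * v 1;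
         u 2 * v 1 - u 1 * v 2, u 0 * v 2 - u 2 * v 0, u 1 * v 0 - u 0 * v 1, u 0 * v 0 + u 1 * v 1 + u 2 * v 2] q) := by
  simp [dotProduct, Matrix.mulVec, Fin.sum_univ_succ, Matrix.cons_val_zero, Matrix.cons_val_one]
  linear_combination -(u 0 * v 0 + u 1 * v 1 + u 2 * v 2) * hq
end
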